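/- Let N ≥ 2 and let s_1⋯s_q and t_1⋯t_p be admissible blocks with 1 ≤ q < p. If (s_1⋯s_q)^∞ > (t_1⋯t_p)^∞ lexicographically, then the generalized Thue–Morse sequence generated by s_1⋯s_q^+ is lexicographically ≥ the generalized Thue–Morse sequence generated by t_1⋯t_p^+. -/

import Mathlib

/-- Reflection of a block: each digit `c` becomes `N - 1 - c`. -/
def reflB (N : ℕ) (w : List ℕ) : List ℕ := w.map (fun c => N - 1 - c)

/-- The block `w` with its last digit incremented by one. -/
def plusB (w : List ℕ) : List ℕ := w.dropLast ++ [w.getLast! + 1]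

/-- The `i`-th cyclic rotation of the block `w` (0-indexed). -/
def rotB (w : List ℕ) (i : ℕ) : List ℕ := w.drop i ++ w.take i

/-- The lexicographic inequalities defining admissibility of a block. -/
def AdmissibleIneq (N : ℕ) (w : List ℕ) : Prop :=
  ∀ i < w.length,
    reflB N w ≤ rotB w i ∧ plusB (w.drop i) ++ reflB N (w.take i) ≤ plusB w

/-- An admissible block in `{0, …, N-1}`. -/
def Admissible (N : ℕ) (w : List ℕ) : Prop :=
  w ≠ [] ∧ (∀ c ∈ w, c < N) ∧ w.getLast! < N - 1 ∧ AdmissibleIneq N w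

/-- Prefixes of the generalized Thue–Morse sequence generated by `plusB w`:
`gtmBlock N w n` is the prefix `θ_1 ⋯ θ_{2^n p}`. -/
def gtmBlock (N : ℕ) (w : List ℕ) : ℕ → List ℕ
  | 0 => plusB w
  | n + 1 => gtmBlock N w n ++ plusB (reflB N (gtmBlock N w n))

/-- The generalized Thue–Morse sequence generated by `plusB w`, 0-indexed:
`gtm N w n = θ_{n+1}`. -/
def gtm (N : ℕ) (w : List ℕ) : ℕ → ℕ := fun n => (gtmBlock N w n).getD n 0

/-- Strict lexicographic order on infinite sequences of digits. -/
def seqLt (a b : ℕ → ℕ) : Prop := ∃ n, (∀ k < n, a k = b k) ∧ a n < b n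

/-- Lexicographic order on infinite sequences of digits. -/
def seqLe (a b : ℕ → ℕ) : Prop := seqLt a b ∨ a = b

/-- Shift of a sequence by `k` places. -/
def shift (a : ℕ → ℕ) (k : ℕ) : ℕ → ℕ := fun n => a (n + k)

/-- The periodic sequence `w^∞` obtained by repeating the block `w`. -/
def per (w : List ℕ) : ℕ → ℕ := fun n => w.getD (n % w.length) 0

/-- Reflection of an infinite sequence. -/
def reflSeq (N : ℕ) (a : ℕ → ℕ) : ℕ → ℕ := fun n => N - 1 - a n

/-- The classical Thue–Morse sequence: parity of the binary digit sum. -/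
def tm (i : ℕ) : ℕ := (Nat.digits 2 i).sum % 2

/-- Number of length-`n` words appearing in sequences of `Z`. -/
noncomputable def wordCount (Z : Set (ℕ → ℕ)) (n : ℕ) : ℕ :=
  Set.ncard { u : List ℕ | u.length = n ∧ ∃ d ∈ Z, ∀ k < n, u.getD k 0 = d k }

/-- `Z` has topological entropy `h`. -/
def hasEntropy (Z : Set (ℕ → ℕ)) (h : ℝ) : Prop :=
  Filter.Tendsto (fun n : ℕ => Real.log (wordCount Z n) / n) Filter.atTop (nhds h)

lemma len_le_plusB (w : List ℕ) : w.length ≤ (plusB w).length := by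
  simp [plusB]; omega

lemma len_le_gtmBlock (N : ℕ) (w : List ℕ) (k : ℕ) : w.length ≤ (gtmBlock N w k).length := by
  induction k with
  | zero => exact len_le_plusB w
  | succ k ih => exact le_trans ih (by simp [gtmBlock])

lemma gtmBlock_getD (N : ℕ) (w : List ℕ) (k j : ℕ) (hj : j < w.length) :
    (gtmBlock N w k).getD j 0 = (plusB w).getD j 0 := by
  induction k with
  | zero => rfl
  | succ k ih =>
      have hlen : j < (gtmBlock N w k).length := lt_of_lt_of_le hj (len_le_gtmBlock N w k)
      rw [show gtmBlock N w (k+1) = gtmBlock N w k ++ plusB (reflB N (gtmBlock N w k)) from rfl,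
        List.getD_append _ _ _ _ hlen]
      exact ih

lemma gtm_eq_plusB (N : ℕ) (w : List ℕ) (k : ℕ) (hk : k < w.length) :
    gtm N w k = (plusB w).getD k 0 := gtmBlock_getD N w k k hk

lemma plusB_getD_lt (w : List ℕ) (k : ℕ) (h : k < w.length - 1) :
    (plusB w).getD k 0 = w.getD k 0 := by
  rw [plusB, List.getD_append _ _ _ _ (by simp; omega),
    List.getD_eq_getElem _ _ (by simp; omega), List.getD_eq_getElem _ _ (by omega)]
  exact List.getElem_dropLast (by simp; omega)

lemma plusB_getD_last (w : List ℕ) (hw : w ≠ []) :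
    (plusB w).getD (w.length - 1) 0 = w.getLast! + 1 := by
  have h1 : w.dropLast.length = w.length - 1 := by simp
  rw [plusB, ← h1, List.getD_eq_getElem _ _ (by simp [List.length_pos_iff.mpr hw])]
  exact List.getElem_concat_length rfl (by simp)

lemma getD_last_eq (w : List ℕ) (hw : w ≠ []) : w.getD (w.length - 1) 0 = w.getLast! := by
  rw [List.getD_eq_getElem _ _ (by have := List.length_pos_iff.mpr hw; omega)]
  rw [List.getLast!_eq_getElem!, getElem!_pos w _ (by have := List.length_pos_iff.mpr hw; omega)]

lemma per_eq_getD (w : List ℕ) (k : ℕ) (hk : k < w.length) : per w k = w.getD k 0 := by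
  simp [per, Nat.mod_eq_of_lt hk]

theorem stmt9 (N : ℕ) (hN : 2 ≤ N) (s t : List ℕ)
    (hs : Admissible N s) (ht : Admissible N t) (hlen : s.length < t.length)
    (h : seqLt (per t) (per s)) :
    seqLe (gtm N t) (gtm N s) := by
  obtain ⟨n, hpre, hlt⟩ := h
  have hsne : s ≠ [] := hs.1
  have hq : 1 ≤ s.length := List.length_pos_iff.mpr hsne
  set q := s.length with hqdef
  set p := t.length with hpdef
  have hqp : q < p := hlen
  set m := min n (q - 1) with hmdef
  have hmq : m ≤ q - 1 := min_le_right _ _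
  have hmn : m ≤ n := min_le_left _ _
  -- gtm t k = per t k for k ≤ q-1
  have hgt : ∀ k, k ≤ q - 1 → gtm N t k = per t k := by
    intro k hk
    have hkp : k < p := by omega
    rw [gtm_eq_plusB N t k hkp, plusB_getD_lt t k (by omega), per_eq_getD t k hkp]
  -- gtm s k = per s k for k < q-1
  have hgs : ∀ k, k < q - 1 → gtm N s k = per s k := by
    intro k hk
    have hkq : k < q := by omega
    rw [gtm_eq_plusB N s k hkq, plusB_getD_lt s k hk, per_eq_getD s k hkq]
  left
  refine ⟨m, ?_, ?_⟩
  · intro k hk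
    have hkn : k < n := lt_of_lt_of_le hk hmn
    rw [hgt k (by omega), hgs k (by omega), hpre k hkn]
  · have h1 : gtm N t m = per t m := hgt m hmq
    have h2 : per t m ≤ per s m := by
      rcases lt_or_eq_of_le hmn with hlt' | heq
      · exact le_of_eq (hpre m hlt')
      · exact le_of_lt (heq ▸ hlt)
    rcases lt_or_eq_of_le hmq with hm' | hm'
    · -- m < q - 1, so m = n
      have hmn' : m = n := by omega
      have : per t m < per s m := hmn' ▸ hlt
      rw [h1, hgs m hm']
      exact this
    · -- m = q - 1
      have h3 : gtm N s m = s.getLast! + 1 := by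
        rw [hm', gtm_eq_plusB N s (q-1) (by omega)]
        exact plusB_getD_last s hsne
      have h4 : per s m = s.getLast! := by
        rw [hm', per_eq_getD s (q-1) (by omega)]
        exact getD_last_eq s hsne
      omega
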